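/- Let p, q be non-constant one-variable holomorphic polynomials and S = { (z,w) ∈ ℂ² : q(w) = conj(p(z)) }. For every closed ball B ⊂ ℂ², the compact set S ∩ B is polynomially convex. -/

import Mathlib

open Complex Polynomial Metric

/-- The polynomially convex hull of a compact set in ℂ² = EuclideanSpace ℂ (Fin 2). -/
def polyHull (K : Set (EuclideanSpace ℂ (Fin 2))) : Set (EuclideanSpace ℂ (Fin 2)) :=
  {z | ∀ P : MvPolynomial (Fin 2) ℂ,
    ‖MvPolynomial.eval (fun j => z j) P‖ ≤
      sSup ((fun w : EuclideanSpace ℂ (Fin 2) => ‖MvPolynomial.eval (fun j => w j) P‖) '' K)}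

namespace PolyConvexAux

open Finset

/-- Evaluation of a 2-variable polynomial at a point of `ℂ²`. -/
noncomputable def evalE (P : MvPolynomial (Fin 2) ℂ) (w : EuclideanSpace ℂ (Fin 2)) : ℂ :=
  MvPolynomial.eval (fun j => w j) P

lemma eval_cont (P : MvPolynomial (Fin 2) ℂ) : Continuous (evalE P) :=
  (MvPolynomial.continuous_eval P).comp (continuous_pi fun i => by fun_prop)

lemma mem_polyHull_iff (K : Set (EuclideanSpace ℂ (Fin 2))) (z : EuclideanSpace ℂ (Fin 2)) :
    z ∈ polyHull K ↔ ∀ P : MvPolynomial (Fin 2) ℂ,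
      ‖evalE P z‖ ≤ sSup ((fun w => ‖evalE P w‖) '' K) := Iff.rfl

lemma eval_aeval (p : Polynomial ℂ) (w : Fin 2 → ℂ) (i : Fin 2) :
    MvPolynomial.eval w (Polynomial.aeval (MvPolynomial.X i) p) = p.eval (w i) := by
  rw [Polynomial.aeval_def, Polynomial.hom_eval₂]
  have h : (MvPolynomial.eval w).comp (MvPolynomial.C : ℂ →+* MvPolynomial (Fin 2) ℂ) =
      RingHom.id ℂ := by ext x; simp
  simp [Polynomial.eval₂_eq_eval_map, h]

lemma evalE_aeval (p : Polynomial ℂ) (w : EuclideanSpace ℂ (Fin 2)) (i : Fin 2) :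
    evalE (Polynomial.aeval (MvPolynomial.X i) p) w = p.eval (w i) :=
  eval_aeval p (fun j => w j) i

/-- Uniform approximation of `exp` by its Taylor polynomials on a disc. -/
lemma exp_approx (M : ℝ) (ε : ℝ) (hε : 0 < ε) :
    ∃ n : ℕ, ∀ x : ℂ, ‖x‖ ≤ M →
      ‖Complex.exp x - ∑ m ∈ range n, x ^ m / m.factorial‖ ≤ ε := by
  rcases le_or_gt M 0 with hM | hM
  · rcases lt_or_ge M 0 with h | h
    · exact ⟨0, fun x hx => absurd (le_trans (norm_nonneg x) hx) (not_le.2 h)⟩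
    · have hM0 : M = 0 := le_antisymm hM h
      subst hM0
      refine ⟨1, fun x hx => ?_⟩
      have hx0 : x = 0 := by
        have h0 := norm_nonneg x
        have : ‖x‖ = 0 := le_antisymm hx h0
        simpa using this
      subst hx0
      simpa using hε.le
  · have h1 : Filter.Tendsto (fun n : ℕ => M ^ n / n.factorial * 2) Filter.atTop (nhds 0) := by
      simpa using (FloorSemiring.tendsto_pow_div_factorial_atTop (K := ℝ) M).mul_const 2
    have h2 : ∀ᶠ n : ℕ in Filter.atTop, M ^ n / n.factorial * 2 ≤ ε :=
      h1.eventually_le_const hε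
    have h3 : ∀ᶠ n : ℕ in Filter.atTop, M / ((n : ℝ) + 1) ≤ 1 / 2 := by
      have ht : Filter.Tendsto (fun n : ℕ => ((n : ℝ) + 1)) Filter.atTop Filter.atTop :=
        Filter.tendsto_atTop_add_const_right _ 1 tendsto_natCast_atTop_atTop
      exact (Filter.Tendsto.const_div_atTop ht M).eventually_le_const (by norm_num)
    rcases (h2.and h3).exists with ⟨n, hn2, hn3⟩
    refine ⟨n, fun x hx => ?_⟩
    have hb : ‖x‖ / (n.succ : ℕ) ≤ 1 / 2 := by
      refine le_trans ?_ hn3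
      push_cast
      gcongr
    calc ‖Complex.exp x - ∑ m ∈ range n, x ^ m / m.factorial‖
        ≤ ‖x‖ ^ n / n.factorial * 2 := Complex.exp_bound' hb
      _ ≤ M ^ n / n.factorial * 2 := by gcongr
      _ ≤ ε := hn2

lemma norm_le_norm_add_sub (a e : ℂ) : ‖a‖ ≤ ‖e‖ + ‖e - a‖ := by
  calc ‖a‖ = ‖e - (e - a)‖ := by rw [sub_sub_cancel]
    _ ≤ ‖e‖ + ‖e - a‖ := norm_sub_le e (e - a)

lemma bdd_evalE (c : EuclideanSpace ℂ (Fin 2)) (R : ℝ) (K : Set (EuclideanSpace ℂ (Fin 2)))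
    (hKsub : K ⊆ Metric.closedBall c R) (P : MvPolynomial (Fin 2) ℂ) :
    BddAbove ((fun w => ‖evalE P w‖) '' K) := by
  have h1 : IsCompact ((fun w => ‖evalE P w‖) '' Metric.closedBall c R) :=
    (isCompact_closedBall c R).image (eval_cont P).norm
  exact h1.bddAbove.mono (Set.image_mono hKsub)

/-- Key lemma: if the real part of (the evaluation of) a polynomial `g` is `≤ 0` on `K`,
then it is `≤ 0` at every point of the polynomial hull of `K`.  This is proved by
approximating `exp ∘ g` by polynomials uniformly on a large disc. -/
lemma hull_re_le (c : EuclideanSpace ℂ (Fin 2)) (R : ℝ) (K : Set (EuclideanSpace ℂ (Fin 2)))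
    (hKsub : K ⊆ Metric.closedBall c R)
    (hKne : K.Nonempty) (ζ : EuclideanSpace ℂ (Fin 2)) (hζ : ζ ∈ polyHull K)
    (g : MvPolynomial (Fin 2) ℂ)
    (hg : ∀ w ∈ K, (evalE g w).re ≤ 0) : (evalE g ζ).re ≤ 0 := by
  rw [mem_polyHull_iff] at hζ
  obtain ⟨M, hMw⟩ : ∃ M : ℝ, (∀ w ∈ K, ‖evalE g w‖ ≤ M) ∧ ‖evalE g ζ‖ ≤ M := by
    refine ⟨sSup ((fun w => ‖evalE g w‖) '' K), fun w hw =>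
      le_csSup (bdd_evalE c R K hKsub g) ⟨w, hw, rfl⟩, hζ g⟩
  obtain ⟨hMw, hMζ⟩ := hMw
  have key : ‖Complex.exp (evalE g ζ)‖ ≤ 1 := by
    refine le_of_forall_pos_le_add fun ε hε => ?_
    obtain ⟨n, hn⟩ := exp_approx M (ε / 2) (by linarith)
    have hn' : ∀ x : ℂ, ‖x‖ ≤ M →
        ‖Complex.exp x - ∑ m ∈ range n, x ^ m / m.factorial‖ ≤ ε / 2 := hn
    set P : MvPolynomial (Fin 2) ℂ :=
      ∑ m ∈ range n, MvPolynomial.C ((m.factorial : ℂ)⁻¹) * g ^ m with hP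
    have hPeval : ∀ w : EuclideanSpace ℂ (Fin 2),
        evalE P w = ∑ m ∈ range n, (evalE g w) ^ m / m.factorial := by
      intro w
      simp [evalE, hP, div_eq_inv_mul, mul_comm]
    have hsup : sSup ((fun w => ‖evalE P w‖) '' K) ≤ 1 + ε / 2 := by
      refine csSup_le (hKne.image _) ?_
      rintro x ⟨w, hw, rfl⟩
      have h1 : ‖Complex.exp (evalE g w)‖ ≤ 1 := by
        rw [Complex.norm_exp]
        exact Real.exp_le_one_iff.2 (hg w hw)
      have h2 := hn' _ (hMw w hw)
      rw [← hPeval w] at h2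
      calc ‖evalE P w‖ ≤ ‖Complex.exp (evalE g w)‖ + ‖Complex.exp (evalE g w) - evalE P w‖ :=
            norm_le_norm_add_sub _ _
        _ ≤ 1 + ε / 2 := add_le_add h1 h2
    have h3 := hn' _ hMζ
    rw [← hPeval ζ] at h3
    calc ‖Complex.exp (evalE g ζ)‖
        ≤ ‖evalE P ζ‖ + ‖evalE P ζ - Complex.exp (evalE g ζ)‖ := norm_le_norm_add_sub _ _
      _ ≤ (1 + ε / 2) + ε / 2 := by
          refine add_le_add (le_trans (hζ P) hsup) ?_
          rw [norm_sub_rev]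
          exact h3
      _ = 1 + ε := by ring
  rw [Complex.norm_exp] at key
  exact Real.exp_le_one_iff.1 key

/-- Same conclusion with equality on `K`, applied to `±g`: the real part vanishes on the hull. -/
lemma hull_re_eq (c : EuclideanSpace ℂ (Fin 2)) (R : ℝ) (K : Set (EuclideanSpace ℂ (Fin 2)))
    (hKsub : K ⊆ Metric.closedBall c R)
    (hKne : K.Nonempty) (ζ : EuclideanSpace ℂ (Fin 2)) (hζ : ζ ∈ polyHull K)
    (g : MvPolynomial (Fin 2) ℂ)
    (hg : ∀ w ∈ K, (evalE g w).re = 0) : (evalE g ζ).re = 0 := by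
  have h1 : (evalE g ζ).re ≤ 0 :=
    hull_re_le c R K hKsub hKne ζ hζ g fun w hw => le_of_eq (hg w hw)
  have h2 : (evalE (-g) ζ).re ≤ 0 := by
    refine hull_re_le c R K hKsub hKne ζ hζ (-g) fun w hw => ?_
    have : evalE (-g) w = -evalE g w := by simp [evalE]
    rw [this]
    simp [hg w hw]
  have h2' : -(evalE g ζ).re ≤ 0 := by
    have : evalE (-g) ζ = -evalE g ζ := by simp [evalE]
    rw [this] at h2
    simpa using h2
  linarith

end PolyConvexAux

open PolyConvexAux Finset in
theorem variety_cap_ball_polyconvex (p q : Polynomial ℂ)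
    (hp : 0 < p.natDegree) (hq : 0 < q.natDegree)
    (c : EuclideanSpace ℂ (Fin 2)) (R : ℝ) :
    polyHull ({ζ : EuclideanSpace ℂ (Fin 2) |
        q.eval (ζ 1) = starRingEnd ℂ (p.eval (ζ 0))} ∩ Metric.closedBall c R)
      = {ζ : EuclideanSpace ℂ (Fin 2) |
        q.eval (ζ 1) = starRingEnd ℂ (p.eval (ζ 0))} ∩ Metric.closedBall c R := by
  set S : Set (EuclideanSpace ℂ (Fin 2)) :=
    {ζ : EuclideanSpace ℂ (Fin 2) | q.eval (ζ 1) = starRingEnd ℂ (p.eval (ζ 0))} with hS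
  set K : Set (EuclideanSpace ℂ (Fin 2)) := S ∩ Metric.closedBall c R with hK
  have hKsub : K ⊆ Metric.closedBall c R := Set.inter_subset_right
  apply Set.Subset.antisymm
  · intro ζ hζ
    rw [mem_polyHull_iff] at hζ
    by_cases hKne : K.Nonempty
    · -- the two polynomial "coordinates" p(z), q(w)
      set A : MvPolynomial (Fin 2) ℂ := Polynomial.aeval (MvPolynomial.X 0) p with hA
      set B : MvPolynomial (Fin 2) ℂ := Polynomial.aeval (MvPolynomial.X 1) q with hB
      have hAe : ∀ w : EuclideanSpace ℂ (Fin 2), evalE A w = p.eval (w 0) := fun w =>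
        evalE_aeval p w 0
      have hBe : ∀ w : EuclideanSpace ℂ (Fin 2), evalE B w = q.eval (w 1) := fun w =>
        evalE_aeval q w 1
      have hmem : ζ ∈ polyHull K := hζ
      -- the variety condition
      have hvar : q.eval (ζ 1) = starRingEnd ℂ (p.eval (ζ 0)) := by
        have hg1 : (evalE (MvPolynomial.C Complex.I * (A + B)) ζ).re = 0 := by
          refine hull_re_eq c R K hKsub hKne ζ hmem _ fun w hw => ?_
          have hwS : q.eval (w 1) = starRingEnd ℂ (p.eval (w 0)) := hw.1
          have : evalE (MvPolynomial.C Complex.I * (A + B)) w =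
              Complex.I * (p.eval (w 0) + q.eval (w 1)) := by
            simp only [evalE, map_mul, map_add, MvPolynomial.eval_C]
            rw [show (MvPolynomial.eval fun j => w j) A = p.eval (w 0) from hAe w,
              show (MvPolynomial.eval fun j => w j) B = q.eval (w 1) from hBe w]
          rw [this, hwS]
          simp [Complex.mul_re, Complex.add_im, Complex.conj_im]
        have hg2 : (evalE (A - B) ζ).re = 0 := by
          refine hull_re_eq c R K hKsub hKne ζ hmem _ fun w hw => ?_
          have hwS : q.eval (w 1) = starRingEnd ℂ (p.eval (w 0)) := hw.1
          have : evalE (A - B) w = p.eval (w 0) - q.eval (w 1) := by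
            simp only [evalE, map_sub]
            rw [show (MvPolynomial.eval fun j => w j) A = p.eval (w 0) from hAe w,
              show (MvPolynomial.eval fun j => w j) B = q.eval (w 1) from hBe w]
          rw [this, hwS]
          simp [Complex.sub_re, Complex.conj_re]
        have e1 : evalE (MvPolynomial.C Complex.I * (A + B)) ζ =
            Complex.I * (p.eval (ζ 0) + q.eval (ζ 1)) := by
          simp only [evalE, map_mul, map_add, MvPolynomial.eval_C]
          rw [show (MvPolynomial.eval fun j => ζ j) A = p.eval (ζ 0) from hAe ζ,
            show (MvPolynomial.eval fun j => ζ j) B = q.eval (ζ 1) from hBe ζ]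
        have e2 : evalE (A - B) ζ = p.eval (ζ 0) - q.eval (ζ 1) := by
          simp only [evalE, map_sub]
          rw [show (MvPolynomial.eval fun j => ζ j) A = p.eval (ζ 0) from hAe ζ,
            show (MvPolynomial.eval fun j => ζ j) B = q.eval (ζ 1) from hBe ζ]
        rw [e1] at hg1
        rw [e2] at hg2
        -- hg1 : re (I * (a + b)) = 0, i.e. im (a + b) = 0
        -- hg2 : re (a - b) = 0
        set a := p.eval (ζ 0)
        set b := q.eval (ζ 1)
        have him : (a + b).im = 0 := by
          have : (Complex.I * (a + b)).re = -(a + b).im := by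
            simp [Complex.mul_re]
          rw [this] at hg1
          linarith
        have hre : (a - b).re = 0 := hg2
        apply Complex.ext
        · have := hre
          simp only [Complex.sub_re] at this
          simp only [Complex.conj_re]
          linarith
        · have := him
          simp only [Complex.add_im] at this
          simp only [Complex.conj_im]
          linarith
      refine ⟨hvar, ?_⟩
      -- membership in the closed ball
      obtain ⟨w₀, hw₀⟩ := id hKne
      have hR0 : 0 ≤ R := le_trans dist_nonneg (mem_closedBall.1 (hKsub hw₀))
      set L : MvPolynomial (Fin 2) ℂ :=
        ∑ j : Fin 2, MvPolynomial.C (starRingEnd ℂ (ζ j - c j)) *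
          (MvPolynomial.X j - MvPolynomial.C (c j)) with hL
      have hLe : ∀ w : EuclideanSpace ℂ (Fin 2),
          evalE L w = @inner ℂ _ _ (ζ - c) (w - c) := by
        intro w
        rw [PiLp.inner_apply]
        simp [evalE, hL, PiLp.inner_apply, RCLike.inner_apply, PiLp.sub_apply]
        ring
      have hLζ : ‖evalE L ζ‖ = ‖ζ - c‖ ^ 2 := by
        rw [hLe ζ, @inner_self_eq_norm_sq_to_K ℂ]
        simp
      have hsup : sSup ((fun w => ‖evalE L w‖) '' K) ≤ ‖ζ - c‖ * R := by
        refine csSup_le (hKne.image _) ?_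
        rintro x ⟨w, hw, rfl⟩
        have h1 : ‖evalE L w‖ ≤ ‖ζ - c‖ * ‖w - c‖ := by
          rw [hLe w]
          exact norm_inner_le_norm _ _
        have h2 : ‖w - c‖ ≤ R := by
          rw [← dist_eq_norm]
          exact mem_closedBall.1 (hKsub hw)
        calc ‖evalE L w‖ ≤ ‖ζ - c‖ * ‖w - c‖ := h1
          _ ≤ ‖ζ - c‖ * R := by gcongr
      have hineq : ‖ζ - c‖ ^ 2 ≤ ‖ζ - c‖ * R := by
        rw [← hLζ]
        exact le_trans (hζ L) hsup
      have hnorm : ‖ζ - c‖ ≤ R := by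
        nlinarith [norm_nonneg (ζ - c), hR0]
      rw [mem_closedBall, dist_eq_norm]
      exact hnorm
    · exfalso
      rw [Set.not_nonempty_iff_eq_empty] at hKne
      have h1 := hζ 1
      rw [hKne] at h1
      simp only [Set.image_empty, Real.sSup_empty] at h1
      have : ‖evalE (1 : MvPolynomial (Fin 2) ℂ) ζ‖ = 1 := by
        simp [evalE]
      rw [this] at h1
      linarith
  · intro ζ hζ
    rw [mem_polyHull_iff]
    intro P
    exact le_csSup (bdd_evalE c R K hKsub P) ⟨ζ, hζ, rfl⟩
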